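/- An affine subspace (translate of a linear subspace) of ℚ^n of dimension m intersects any finite grid A₁ × A₂ × ⋯ × Aₙ, where each Aᵢ ⊆ ℚ has cardinality k, in at most k^m points. -/

import Mathlib

/-- A translate of an `m`-dimensional subspace of ℚ^n meets any grid
`A₁ × ⋯ × Aₙ` with `|Aᵢ| = k` in at most `k^m` points. -/
theorem stmt10 (n m k : ℕ) (V : Submodule ℚ (Fin n → ℚ))
    (hV : Module.finrank ℚ V = m) (v : Fin n → ℚ)
    (A : Fin n → Finset ℚ) (hA : ∀ i, (A i).card = k) :
    Set.ncard {x : Fin n → ℚ | (∀ i, x i ∈ A i) ∧ x - v ∈ V} ≤ k ^ m := by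
  classical
  set S : Set (Fin n → ℚ) := {x : Fin n → ℚ | (∀ i, x i ∈ A i) ∧ x - v ∈ V} with hS
  set φ : Fin n → Module.Dual ℚ V := fun i => (LinearMap.proj i).comp V.subtype with hφ
  have hspan : Submodule.span ℚ (Set.range φ) = ⊤ := by
    have hco : (Submodule.span ℚ (Set.range φ)).dualCoannihilator = ⊥ := by
      rw [Submodule.eq_bot_iff]
      intro u hu
      rw [Submodule.mem_dualCoannihilator] at hu
      have : ∀ i, (u : Fin n → ℚ) i = 0 := by
        intro i
        have := hu (φ i) (Submodule.subset_span ⟨i, rfl⟩)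
        simpa [hφ] using this
      ext i
      simp [this i]
    have h := Subspace.finrank_add_finrank_dualCoannihilator_eq
      (Submodule.span ℚ (Set.range φ))
    rw [hco, finrank_bot, add_zero] at h
    rw [← Subspace.dual_finrank_eq (K := ℚ) (V := V)] at h
    exact Submodule.eq_top_of_finrank_eq h
  obtain ⟨b, hbsub, hbspan, hbind⟩ := exists_linearIndependent ℚ (Set.range φ)
  rw [hspan] at hbspan
  haveI : Fintype b := (Set.Finite.fintype (hbind.setFinite))
  let B : Module.Basis b ℚ (Module.Dual ℚ V) := Module.Basis.mk hbind (by rw [Subtype.range_val]; exact hbspan.ge)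
  have hcard : Fintype.card b = m := by
    rw [← Module.finrank_eq_card_basis B, Subspace.dual_finrank_eq, hV]
  choose ι hι using fun w : b => (hbsub w.2 : (w : Module.Dual ℚ V) ∈ Set.range φ)
  have hinj : Set.InjOn (fun x (w : b) => x (ι w)) S := by
    intro x hx y hy hxy
    have hu : x - y ∈ V := by
      have := V.sub_mem hx.2 hy.2
      simpa using this
    have hu0 : (⟨x - y, hu⟩ : V) = 0 := by
      rw [← Module.forall_dual_apply_eq_zero_iff ℚ (⟨x - y, hu⟩ : V)]
      intro ψ
      have hψ : ψ ∈ Submodule.span ℚ b := by rw [hbspan]; trivial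
      induction hψ using Submodule.span_induction with
      | mem w hw =>
        have h1 : φ (ι ⟨w, hw⟩) (⟨x - y, hu⟩ : V) = 0 := by
          have h2 := congrFun hxy (⟨w, hw⟩ : b)
          simp only [hφ, LinearMap.comp_apply, Submodule.coe_subtype, LinearMap.proj_apply]
          simp only at h2
          simp [h2]
        rwa [hι ⟨w, hw⟩] at h1
      | zero => simp
      | add a c _ _ h1 h2 => simp [h1, h2]
      | smul r a _ h1 => simp [h1]
    have : x - y = 0 := congrArg Subtype.val hu0
    exact sub_eq_zero.mp this
  calc Set.ncard S = Set.ncard ((fun x (w : b) => x (ι w)) '' S) := (Set.ncard_image_of_injOn hinj).symm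
    _ ≤ Set.ncard ((Fintype.piFinset (fun w : b => A (ι w)) : Finset (b → ℚ)) : Set (b → ℚ)) := by
        apply Set.ncard_le_ncard ?_ (Finset.finite_toSet _)
        rintro _ ⟨x, hx, rfl⟩
        simp only [Finset.mem_coe, Fintype.mem_piFinset]
        exact fun w => hx.1 (ι w)
    _ = k ^ m := by
        rw [Set.ncard_coe_finset, Fintype.card_piFinset]
        simp [hA, hcard]
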